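/- Let C be a d-dimensional copula that is not Kendall-countermonotonic. Then there exist p ∈ (0, 1/2] and a, b ∈ (0,1)^d with a ≤ b (coordinatewise) such that Q^C([0,a]) = p = Q^C([b,1]). -/

import Mathlib

open MeasureTheory unitInterval

/-- The unit cube `[0,1]^d`, modelled as functions `Fin d → [0,1]`. -/
abbrev Cube (d : ℕ) : Type := Fin d → unitInterval

/-- `η_K(u,v)`: the vector whose `k`-th coordinate is `v k` if `k ∈ K` and `u k` otherwise. -/
def etaK {d : ℕ} (K : Finset (Fin d)) (u v : Cube d) : Cube d :=
  fun k => if k ∈ K then v k else u k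

/-- `C` is a `d`-dimensional copula. -/
def IsCopula {d : ℕ} (C : Cube d → ℝ) : Prop :=
  (∀ u v : Cube d, u ≤ v →
      0 ≤ ∑ K : Finset (Fin d), (-1 : ℝ) ^ (d - K.card) * C (etaK K u v)) ∧
  (∀ k : Fin d, ∀ u : Cube d, C (etaK {k} u 0) = 0) ∧
  (∀ k : Fin d, ∀ u : Cube d, C (etaK {k} 1 u) = (u k : ℝ))

/-- The reflection `ν_K`, i.e. the composition of the commuting reflections `ν_k`, `k ∈ K`,
written in closed (inclusion–exclusion) form: the coordinates in `L ⊆ K` are reflected to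
`1 - u k`, the remaining coordinates of `K` are set to `1`. -/
noncomputable def nuK {d : ℕ} (K : Finset (Fin d)) (C : Cube d → ℝ) : Cube d → ℝ :=
  fun u => ∑ L ∈ K.powerset, (-1 : ℝ) ^ L.card *
    C (fun k => if k ∈ L then unitInterval.symm (u k) else if k ∈ K then 1 else u k)

/-- The total reflection `τ = ν_{{1,...,d}}`, sending a copula to its survival copula. -/
noncomputable def survival {d : ℕ} (C : Cube d → ℝ) : Cube d → ℝ := nuK Finset.univ C

/-- The concordance order `C ⪯ D`: `C(u) ≤ D(u)` and `(τ C)(u) ≤ (τ D)(u)` for all `u`. -/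
def ConcLE {d : ℕ} (C D : Cube d → ℝ) : Prop :=
  (∀ u, C u ≤ D u) ∧ (∀ u, survival C u ≤ survival D u)

/-- A minimal copula: a minimal element of the set of all copulas w.r.t. concordance order. -/
def IsMinimalCopula {d : ℕ} (C : Cube d → ℝ) : Prop :=
  IsCopula C ∧ ∀ D : Cube d → ℝ, IsCopula D → ConcLE D C → D = C

/-- `μ` is the copula measure `Q^C` of `C`: a Borel probability measure on the cube
with `μ [0,u] = C u` for all `u`. -/
def IsCopulaMeasure {d : ℕ} (C : Cube d → ℝ) (μ : Measure (Cube d)) : Prop :=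
  IsProbabilityMeasure μ ∧ ∀ u : Cube d, μ (Set.Icc 0 u) = ENNReal.ofReal (C u)

/-- `C` is `K`-countermonotonic: there are strictly increasing continuous functions
`g k : [0,1] → ℝ` (`k ∈ K`) and `c : ℝ` with `Q^C {u : ∑ k ∈ K, g k (u k) = c} = 1`. -/
def IsKCM {d : ℕ} (K : Finset (Fin d)) (C : Cube d → ℝ) : Prop :=
  ∃ (g : Fin d → unitInterval → ℝ) (c : ℝ),
    (∀ k ∈ K, StrictMono (g k) ∧ Continuous (g k)) ∧
    ∃ μ : Measure (Cube d), IsCopulaMeasure C μ ∧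
      μ {u : Cube d | ∑ k ∈ K, g k (u k) = c} = 1

/-- `C` is Kendall-countermonotonic (`τ`-CM):
`min (C u) ((τ C)(1 - u)) = 0` for every `u` with `0 < u < 1` coordinatewise. -/
noncomputable def IsTauCM {d : ℕ} (C : Cube d → ℝ) : Prop :=
  ∀ u : Cube d, (∀ k, 0 < u k ∧ u k < 1) →
    min (C u) (survival C (fun k => unitInterval.symm (u k))) = 0

/-- The upper Fréchet–Hoeffding bound `M(u) = min {u_1, ..., u_d}`. -/
noncomputable def Mcop {d : ℕ} : Cube d → ℝ :=
  fun u => sInf (Set.range fun k => (u k : ℝ))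

section Aux
variable {d : ℕ} {C : Cube d → ℝ}

/-- Grounding: every copula is nonnegative. -/
lemma copula_nonneg (hC : IsCopula C) (w : Cube d) : 0 ≤ C w := by
  have h := hC.1 0 w (fun k => (w k).2.1)
  have hz : ∀ K : Finset (Fin d), K ≠ Finset.univ → C (etaK K 0 w) = 0 := by
    intro K hK
    obtain ⟨k, hk⟩ : ∃ k, k ∉ K := by
      by_contra h'; push_neg at h'; exact hK (Finset.eq_univ_iff_forall.2 h')
    have : etaK K 0 w = etaK {k} (etaK K 0 w) 0 := by
      funext j
      simp only [etaK, Finset.mem_singleton]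
      by_cases hj : j = k
      · subst hj; simp [hk]
      · simp [hj]
    rw [this, hC.2.1 k]
  rw [Finset.sum_eq_single Finset.univ (fun K _ hK => by rw [hz K hK, mul_zero])
    (fun h => absurd (Finset.mem_univ _) h)] at h
  have he : etaK Finset.univ 0 w = w := by funext j; simp [etaK]
  simpa [he] using h

lemma slab_measure (hC : IsCopula C) {μ : Measure (Cube d)} (hμ : IsCopulaMeasure C μ)
    (k : Fin d) (t : unitInterval) :
    μ {w : Cube d | w k ≤ t} = ENNReal.ofReal t := by
  have hset : {w : Cube d | w k ≤ t} = Set.Icc 0 (etaK {k} 1 (fun _ => t)) := by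
    ext w
    simp only [Set.mem_setOf_eq, Set.mem_Icc, Pi.le_def, etaK, Finset.mem_singleton]
    constructor
    · intro h
      refine ⟨fun j => (w j).2.1, fun j => ?_⟩
      by_cases hj : j = k
      · subst hj; simpa using h
      · simp only [hj, if_false]; exact (w j).2.2
    · intro h
      simpa using h.2 k
  rw [hset, hμ.2, hC.2.2 k]

lemma slab_measurable (k : Fin d) (t : unitInterval) :
    MeasurableSet {w : Cube d | w k ≤ t} := by
  have : {w : Cube d | w k ≤ t} = (fun w : Cube d => w k) ⁻¹' (Set.Iic t) := rfl
  rw [this]; exact (measurable_pi_apply k) measurableSet_Iic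

lemma hyperplane_measurable (k : Fin d) (c : unitInterval) :
    MeasurableSet {w : Cube d | w k = c} := by
  have : {w : Cube d | w k = c} = (fun w : Cube d => w k) ⁻¹' {c} := rfl
  rw [this]; exact (measurable_pi_apply k) (measurableSet_singleton c)

lemma hyperplane_null (hC : IsCopula C) {μ : Measure (Cube d)} (hμ : IsCopulaMeasure C μ)
    (k : Fin d) (c : unitInterval) :
    μ {w : Cube d | w k = c} = 0 := by
  have key : ∀ ε : ℝ, 0 < ε → μ {w : Cube d | w k = c} ≤ ENNReal.ofReal ε := by
    intro ε hε
    rcases le_or_gt (c : ℝ) ε with h | h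
    · calc μ {w : Cube d | w k = c} ≤ μ {w : Cube d | w k ≤ c} :=
            measure_mono (fun w hw => le_of_eq hw)
        _ = ENNReal.ofReal c := slab_measure hC hμ k c
        _ ≤ ENNReal.ofReal ε := ENNReal.ofReal_le_ofReal h
    · set t : unitInterval := ⟨(c : ℝ) - ε, by
        constructor
        · linarith
        · linarith [(c.2.2 : (c:ℝ) ≤ 1)]⟩ with ht
      have hdisj : Disjoint {w : Cube d | w k = c} {w : Cube d | w k ≤ t} := by
        rw [Set.disjoint_left]
        intro w hw1 hw2
        have h2 : (w k : ℝ) ≤ (c : ℝ) - ε := hw2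
        rw [show w k = c from hw1] at h2
        linarith
      have hsub : {w : Cube d | w k = c} ∪ {w : Cube d | w k ≤ t} ⊆ {w : Cube d | w k ≤ c} := by
        rintro w (hw | hw)
        · exact le_of_eq hw
        · have hw' : w k ≤ t := hw
          refine le_trans hw' ?_
          rw [← Subtype.coe_le_coe]
          show (c : ℝ) - ε ≤ (c : ℝ)
          linarith
      have h1 : μ {w : Cube d | w k = c} + ENNReal.ofReal ((c:ℝ) - ε) ≤ ENNReal.ofReal c := by
        rw [← slab_measure hC hμ k t]
        rw [show (ENNReal.ofReal (c:ℝ)) = μ {w : Cube d | w k ≤ c} from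
          (slab_measure hC hμ k c).symm]
        rw [← measure_union hdisj (slab_measurable k t)]
        exact measure_mono hsub
      have h3 : μ {w : Cube d | w k = c} ≤ ENNReal.ofReal c - ENNReal.ofReal ((c:ℝ) - ε) :=
        ENNReal.le_sub_of_add_le_right ENNReal.ofReal_ne_top h1
      calc μ {w : Cube d | w k = c} ≤ _ := h3
        _ ≤ ENNReal.ofReal ε := by
            rw [tsub_le_iff_right, ← ENNReal.ofReal_add hε.le (by linarith)]
            apply ENNReal.ofReal_le_ofReal; linarith
  refine le_antisymm ?_ zero_le
  refine ENNReal.le_of_forall_pos_le_add (fun ε hε _ => ?_)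
  simpa using (key ε (by exact_mod_cast hε)).trans (by simp)

end Aux

section Survival
variable {d : ℕ} {C : Cube d → ℝ}

lemma survival_eq (hC : IsCopula C) {μ : Measure (Cube d)} (hμ : IsCopulaMeasure C μ)
    (v : Cube d) :
    0 ≤ survival C (fun k => unitInterval.symm (v k)) ∧
    μ (Set.Icc v 1) = ENNReal.ofReal (survival C (fun k => unitInterval.symm (v k))) := by
  haveI : IsProbabilityMeasure μ := hμ.1
  set A : Finset (Fin d) → Set (Cube d) := fun L => {w | ∀ k ∈ L, w k ≤ v k} with hA
  have hA_meas : ∀ L, MeasurableSet (A L) := by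
    intro L
    have : A L = ⋂ k ∈ L, {w : Cube d | w k ≤ v k} := by
      ext w; simp [hA]
    rw [this]
    exact Set.Finite.measurableSet_biInter (L.finite_toSet) (fun k _ => slab_measurable k (v k))
  set E : Set (Cube d) := {w | ∀ k, v k < w k} with hE
  have hE_meas : MeasurableSet E := by
    have : E = ⋂ k, ({w : Cube d | w k ≤ v k})ᶜ := by
      ext w
      simp only [hE, Set.mem_setOf_eq, Set.mem_iInter, Set.mem_compl_iff, not_le]
    rw [this]
    exact MeasurableSet.iInter (fun k => (slab_measurable k (v k)).compl)
  set pt : Finset (Fin d) → Cube d := fun L k => if k ∈ L then v k else 1 with hpt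
  have hApt : ∀ L, A L = Set.Icc 0 (pt L) := by
    intro L
    ext w
    simp only [hA, hpt, Set.mem_setOf_eq, Set.mem_Icc, Pi.le_def]
    constructor
    · intro h
      refine ⟨fun k => (w k).2.1, fun k => ?_⟩
      by_cases hk : k ∈ L
      · simpa [hk] using h k hk
      · simp only [hk, if_false]; exact (w k).2.2
    · intro h k hk
      have := h.2 k
      simpa [hk] using this
  have hmuA : ∀ L, (μ (A L)).toReal = C (pt L) := by
    intro L
    rw [hApt L, hμ.2, ENNReal.toReal_ofReal (copula_nonneg hC _)]
  -- survival value as alternating sum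
  have hs : survival C (fun k => unitInterval.symm (v k))
      = ∑ L : Finset (Fin d), (-1 : ℝ) ^ L.card * (μ (A L)).toReal := by
    rw [survival, nuK, Finset.powerset_univ]
    refine Finset.sum_congr rfl (fun L _ => ?_)
    rw [hmuA L]
    refine congrArg (fun x => (-1:ℝ)^L.card * x) (congrArg C ?_)
    funext k
    by_cases hk : k ∈ L <;> simp [hpt, hk, unitInterval.symm_symm]
  -- pointwise inclusion-exclusion
  have hpoint : ∀ w : Cube d, E.indicator (fun _ => (1:ℝ)) w
      = ∑ L : Finset (Fin d), (-1 : ℝ) ^ L.card * (A L).indicator (fun _ => (1:ℝ)) w := by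
    intro w
    have hfac : ∀ L : Finset (Fin d),
        (A L).indicator (fun _ => (1:ℝ)) w = ∏ k ∈ L, (if w k ≤ v k then (1:ℝ) else 0) := by
      intro L
      by_cases hw : w ∈ A L
      · have h1 : ∀ k ∈ L, (if w k ≤ v k then (1:ℝ) else 0) = 1 := fun k hk => if_pos (hw k hk)
        rw [Set.indicator_of_mem hw, Finset.prod_congr rfl h1, Finset.prod_const_one]
      · rw [Set.indicator_of_notMem hw]
        simp only [hA, Set.mem_setOf_eq, not_forall] at hw
        obtain ⟨k, hk, hk2⟩ := hw
        symm
        refine Finset.prod_eq_zero hk ?_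
        exact if_neg hk2
    have hprod : E.indicator (fun _ => (1:ℝ)) w
        = ∏ k : Fin d, (-(if w k ≤ v k then (1:ℝ) else 0) + 1) := by
      by_cases hw : w ∈ E
      · have h1 : ∀ k ∈ Finset.univ, (-(if w k ≤ v k then (1:ℝ) else 0) + 1) = 1 := by
          intro k _
          rw [if_neg (not_le.mpr (hw k))]; ring
        rw [Set.indicator_of_mem hw, Finset.prod_congr rfl h1, Finset.prod_const_one]
      · rw [Set.indicator_of_notMem hw]
        simp only [hE, Set.mem_setOf_eq, not_forall, not_lt] at hw
        obtain ⟨k, hk⟩ := hw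
        refine (Finset.prod_eq_zero (Finset.mem_univ k) ?_).symm
        rw [if_pos hk]; ring
    rw [hprod, Finset.prod_add, Finset.powerset_univ]
    refine Finset.sum_congr rfl (fun L _ => ?_)
    rw [hfac L]
    simp only [Finset.prod_const_one, mul_one]
    rw [show (fun k => -(if w k ≤ v k then (1:ℝ) else 0)) = fun k =>
      (-1) * (if w k ≤ v k then (1:ℝ) else 0) from funext (fun k => by ring)]
    rw [Finset.prod_mul_distrib, Finset.prod_const]
  -- integrate
  have hint : ∀ (S : Set (Cube d)), MeasurableSet S →
      ∫ w, S.indicator (fun _ => (1:ℝ)) w ∂μ = (μ S).toReal := by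
    intro S hS
    rw [integral_indicator hS]; simp; rfl
  have hintg : ∀ L : Finset (Fin d),
      Integrable (fun w => (-1 : ℝ) ^ L.card * (A L).indicator (fun _ => (1:ℝ)) w) μ := by
    intro L
    exact ((integrable_const (1:ℝ)).indicator (hA_meas L)).const_mul _
  have key : (μ E).toReal = ∑ L : Finset (Fin d), (-1 : ℝ) ^ L.card * (μ (A L)).toReal := by
    rw [← hint E hE_meas]
    rw [show (fun w => E.indicator (fun _ => (1:ℝ)) w) = fun w =>
      ∑ L : Finset (Fin d), (-1 : ℝ) ^ L.card * (A L).indicator (fun _ => (1:ℝ)) w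
      from funext hpoint]
    rw [integral_finset_sum _ (fun L _ => hintg L)]
    refine Finset.sum_congr rfl (fun L _ => ?_)
    rw [integral_const_mul, hint _ (hA_meas L)]
  -- μ E = μ (Icc v 1)
  have hmuE : μ (Set.Icc v 1) = μ E := by
    refine le_antisymm ?_ (measure_mono (fun w hw => ?_))
    · have hsub : Set.Icc v 1 ⊆ E ∪ ⋃ k, {w : Cube d | w k = v k} := by
        intro w hw
        by_cases hwE : w ∈ E
        · exact Or.inl hwE
        · simp only [hE, Set.mem_setOf_eq, not_forall, not_lt] at hwE
          obtain ⟨k, hk⟩ := hwE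
          exact Or.inr (Set.mem_iUnion.2 ⟨k, le_antisymm hk (hw.1 k)⟩)
      calc μ (Set.Icc v 1) ≤ μ (E ∪ ⋃ k, {w : Cube d | w k = v k}) := measure_mono hsub
        _ ≤ μ E + μ (⋃ k, {w : Cube d | w k = v k}) := measure_union_le _ _
        _ = μ E := by
            rw [measure_iUnion_null (fun k => hyperplane_null hC hμ k (v k)), add_zero]
    · exact ⟨fun k => (hw k).le, fun k => (w k).2.2⟩
  constructor
  · rw [hs, ← key]; exact ENNReal.toReal_nonneg
  · rw [hmuE, hs, ← key, ENNReal.ofReal_toReal (measure_ne_top μ E)]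
end Survival

section Helpers
open Filter
variable {d : ℕ} {C : Cube d → ℝ}

lemma tendsto_upper_left {μ : Measure (Cube d)} [IsFiniteMeasure μ]
    (x : ℕ → Cube d) (xe : Cube d) (hx : Monotone x)
    (hsup : ∀ k (w : unitInterval), (∀ n, x n k ≤ w) ↔ xe k ≤ w) :
    Tendsto (fun n => μ (Set.Icc (x n) 1)) atTop (nhds (μ (Set.Icc xe 1))) := by
  have hiInter : (⋂ n, Set.Icc (x n) 1) = Set.Icc xe 1 := by
    ext w
    simp only [Set.mem_iInter, Set.mem_Icc, Pi.le_def]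
    constructor
    · intro h
      exact ⟨fun k => (hsup k (w k)).1 (fun n => (h n).1 k), fun k => (w k).2.2⟩
    · intro h n
      exact ⟨fun k => (hsup k (w k)).2 (h.1 k) n, h.2⟩
  have := tendsto_measure_iInter_atTop (μ := μ)
    (s := fun n => Set.Icc (x n) 1)
    (fun n => (measurableSet_Icc).nullMeasurableSet)
    (fun n m hnm => Set.Icc_subset_Icc (hx hnm) le_rfl)
    ⟨0, measure_ne_top μ _⟩
  rwa [hiInter] at this

lemma tendsto_lower_right {μ : Measure (Cube d)} [IsFiniteMeasure μ]
    (x : ℕ → Cube d) (xe : Cube d) (hx : Antitone x)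
    (hinf : ∀ k (w : unitInterval), (∀ n, w ≤ x n k) ↔ w ≤ xe k) :
    Tendsto (fun n => μ (Set.Icc 0 (x n))) atTop (nhds (μ (Set.Icc 0 xe))) := by
  have hiInter : (⋂ n, Set.Icc 0 (x n)) = Set.Icc 0 xe := by
    ext w
    simp only [Set.mem_iInter, Set.mem_Icc, Pi.le_def]
    constructor
    · intro h
      exact ⟨fun k => (w k).2.1, fun k => (hinf k (w k)).1 (fun n => (h n).2 k)⟩
    · intro h n
      exact ⟨fun k => (w k).2.1, fun k => (hinf k (w k)).2 (h.2 k) n⟩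
  have := tendsto_measure_iInter_atTop (μ := μ)
    (s := fun n => Set.Icc 0 (x n))
    (fun n => (measurableSet_Icc).nullMeasurableSet)
    (fun n m hnm => Set.Icc_subset_Icc le_rfl (hx hnm))
    ⟨0, measure_ne_top μ _⟩
  rwa [hiInter] at this

lemma tendsto_upper_right (hC : IsCopula C) {μ : Measure (Cube d)} (hμ : IsCopulaMeasure C μ)
    (x : ℕ → Cube d) (xe : Cube d) (hx : Antitone x) (hge : ∀ n, xe ≤ x n)
    (happ : ∀ w : Cube d, (∀ k, xe k < w k) → ∃ n, x n ≤ w) :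
    Tendsto (fun n => μ (Set.Icc (x n) 1)) atTop (nhds (μ (Set.Icc xe 1))) := by
  have hmono : Monotone (fun n => Set.Icc (x n) (1 : Cube d)) :=
    fun n m hnm => Set.Icc_subset_Icc (hx hnm) le_rfl
  have h1 := tendsto_measure_iUnion_atTop (μ := μ) hmono
  have hUnion : μ (⋃ n, Set.Icc (x n) 1) = μ (Set.Icc xe 1) := by
    refine le_antisymm (measure_mono (Set.iUnion_subset
      (fun n => Set.Icc_subset_Icc (hge n) le_rfl))) ?_
    have hsub : Set.Icc xe 1 ⊆ (⋃ n, Set.Icc (x n) 1) ∪ ⋃ k, {w : Cube d | w k = xe k} := by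
      intro w hw
      by_cases hstrict : ∀ k, xe k < w k
      · obtain ⟨n, hn⟩ := happ w hstrict
        exact Or.inl (Set.mem_iUnion.2 ⟨n, hn, fun k => (w k).2.2⟩)
      · push_neg at hstrict
        obtain ⟨k, hk⟩ := hstrict
        exact Or.inr (Set.mem_iUnion.2 ⟨k, le_antisymm hk (hw.1 k)⟩)
    calc μ (Set.Icc xe 1) ≤ μ ((⋃ n, Set.Icc (x n) 1) ∪ ⋃ k, {w : Cube d | w k = xe k}) :=
          measure_mono hsub
      _ ≤ μ (⋃ n, Set.Icc (x n) 1) + μ (⋃ k, {w : Cube d | w k = xe k}) := measure_union_le _ _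
      _ = μ (⋃ n, Set.Icc (x n) 1) := by
          rw [measure_iUnion_null (fun k => hyperplane_null hC hμ k (xe k)), add_zero]
  rwa [hUnion] at h1

lemma tendsto_lower_left (hC : IsCopula C) {μ : Measure (Cube d)} (hμ : IsCopulaMeasure C μ)
    (x : ℕ → Cube d) (xe : Cube d) (hx : Monotone x) (hle : ∀ n, x n ≤ xe)
    (happ : ∀ w : Cube d, (∀ k, w k < xe k) → ∃ n, w ≤ x n) :
    Tendsto (fun n => μ (Set.Icc 0 (x n))) atTop (nhds (μ (Set.Icc 0 xe))) := by
  have hmono : Monotone (fun n => Set.Icc (0 : Cube d) (x n)) :=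
    fun n m hnm => Set.Icc_subset_Icc le_rfl (hx hnm)
  have h1 := tendsto_measure_iUnion_atTop (μ := μ) hmono
  have hUnion : μ (⋃ n, Set.Icc 0 (x n)) = μ (Set.Icc 0 xe) := by
    refine le_antisymm (measure_mono (Set.iUnion_subset
      (fun n => Set.Icc_subset_Icc le_rfl (hle n)))) ?_
    have hsub : Set.Icc 0 xe ⊆ (⋃ n, Set.Icc 0 (x n)) ∪ ⋃ k, {w : Cube d | w k = xe k} := by
      intro w hw
      by_cases hstrict : ∀ k, w k < xe k
      · obtain ⟨n, hn⟩ := happ w hstrict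
        exact Or.inl (Set.mem_iUnion.2 ⟨n, fun k => (w k).2.1, hn⟩)
      · push_neg at hstrict
        obtain ⟨k, hk⟩ := hstrict
        exact Or.inr (Set.mem_iUnion.2 ⟨k, le_antisymm (hw.2 k) hk⟩)
    calc μ (Set.Icc 0 xe) ≤ μ ((⋃ n, Set.Icc 0 (x n)) ∪ ⋃ k, {w : Cube d | w k = xe k}) :=
          measure_mono hsub
      _ ≤ μ (⋃ n, Set.Icc 0 (x n)) + μ (⋃ k, {w : Cube d | w k = xe k}) := measure_union_le _ _
      _ = μ (⋃ n, Set.Icc 0 (x n)) := by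
          rw [measure_iUnion_null (fun k => hyperplane_null hC hμ k (xe k)), add_zero]
  rwa [hUnion] at h1

/-- Intermediate value theorem for an antitone function with one-sided sequential continuity. -/
lemma key_ivt (f : ℝ → ℝ) (hf : Antitone f)
    (hl : ∀ t : ℝ, Tendsto (fun n : ℕ => f (t - 1/(n+1))) atTop (nhds (f t)))
    (hr : ∀ t : ℝ, Tendsto (fun n : ℕ => f (t + 1/(n+1))) atTop (nhds (f t)))
    {α t0 t1 : ℝ} (h01 : t0 ≤ t1) (h0 : α ≤ f t0) (h1 : f t1 < α) :
    ∃ t, t0 ≤ t ∧ t ≤ t1 ∧ f t = α := by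
  set T := {t | t0 ≤ t ∧ α ≤ f t} with hT
  have hT0 : t0 ∈ T := ⟨le_refl _, h0⟩
  have hTbdd : ∀ t ∈ T, t ≤ t1 := by
    intro t ht
    by_contra h
    push_neg at h
    have := hf h.le
    exact absurd ht.2 (by linarith)
  have hbdd : BddAbove T := ⟨t1, fun t ht => hTbdd t ht⟩
  set ts := sSup T with hts
  have h0s : t0 ≤ ts := le_csSup hbdd hT0
  have h1s : ts ≤ t1 := csSup_le ⟨t0, hT0⟩ hTbdd
  have hge : α ≤ f ts := by
    have hn : ∀ n : ℕ, α ≤ f (ts - 1/(n+1)) := by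
      intro n
      have hpos : (0:ℝ) < 1/(n+1) := by positivity
      obtain ⟨r, hrT, hr2⟩ := exists_lt_of_lt_csSup ⟨t0, hT0⟩
        (show ts - 1/(n+1) < ts by linarith)
      exact le_trans hrT.2 (hf hr2.le)
    exact ge_of_tendsto (hl ts) (Filter.Eventually.of_forall hn)
  have hle2 : f ts ≤ α := by
    have hn : ∀ n : ℕ, f (ts + 1/(n+1)) ≤ α := by
      intro n
      have hpos : (0:ℝ) < 1/(n+1) := by positivity
      by_contra h
      push_neg at h
      have hmem : ts + 1/(n+1) ∈ T := ⟨by linarith, h.le⟩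
      have := le_csSup hbdd hmem
      linarith
    exact le_of_tendsto (hr ts) (Filter.Eventually.of_forall hn)
  exact ⟨ts, h0s, h1s, le_antisymm hle2 hge⟩

/-- Clamp a real number into the unit interval. -/
noncomputable def clampI (r : ℝ) : unitInterval :=
  ⟨max 0 (min 1 r), le_max_left _ _, max_le zero_le_one (min_le_left _ _)⟩

lemma clampI_coe (r : ℝ) : (clampI r : ℝ) = max 0 (min 1 r) := rfl

lemma clampI_mono : Monotone clampI := by
  intro r s hrs
  rw [← Subtype.coe_le_coe, clampI_coe, clampI_coe]
  exact max_le_max le_rfl (min_le_min le_rfl hrs)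

lemma clampI_lip {r s : ℝ} (h : r ≤ s) : (clampI s : ℝ) ≤ (clampI r : ℝ) + (s - r) := by
  rw [clampI_coe, clampI_coe]
  simp only [max_def, min_def]
  split_ifs <;> linarith

lemma clampI_of_mem {r : ℝ} (h0 : 0 ≤ r) (h1 : r ≤ 1) : (clampI r : ℝ) = r := by
  rw [clampI_coe, min_eq_right h1, max_eq_right h0]

end Helpers

section MoreHelpers
lemma max_lip (a : ℝ) {r s : ℝ} (h : r ≤ s) : max a s ≤ max a r + (s - r) := by
  simp only [max_def]
  split_ifs <;> linarith

lemma min_lip (a : ℝ) {r s : ℝ} (h : r ≤ s) : min a s ≤ min a r + (s - r) := by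
  simp only [min_def]
  split_ifs <;> linarith
end MoreHelpers


set_option maxHeartbeats 1000000 in
/-- If a copula `C` is not Kendall-countermonotonic, then there exist `p ∈ (0, 1/2]` and
`a ≤ b` in the open cube with `Q^C [0,a] = p = Q^C [b,1]`. -/
theorem stmt18 (d : ℕ) (hd : 2 ≤ d) (C : Cube d → ℝ) (hC : IsCopula C)
    (hnot : ¬ IsTauCM C)
    (μ : Measure (Cube d)) (hμ : IsCopulaMeasure C μ) :
    ∃ p : ℝ, p ∈ Set.Ioc (0 : ℝ) (1 / 2) ∧
      ∃ a b : Cube d, (∀ k, 0 < a k ∧ a k < 1) ∧ (∀ k, 0 < b k ∧ b k < 1) ∧ a ≤ b ∧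
        μ (Set.Icc 0 a) = ENNReal.ofReal p ∧ μ (Set.Icc b 1) = ENNReal.ofReal p := by
  haveI : IsProbabilityMeasure μ := hμ.1
  have hdpos : 0 < d := by omega
  set k₀ : Fin d := ⟨0, hdpos⟩ with hk₀
  unfold IsTauCM at hnot
  push_neg at hnot
  obtain ⟨u, hu, hmin⟩ := hnot
  set α := C u with hα
  set s := survival C (fun k => unitInterval.symm (u k)) with hsdef
  obtain ⟨hs0, hsu⟩ := survival_eq hC hμ u
  have hα0 : 0 ≤ α := copula_nonneg hC u
  have hαpos : 0 < α := by
    rcases lt_or_eq_of_le hα0 with h | h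
    · exact h
    · exact absurd (show min α s = 0 by rw [← h, min_eq_left hs0]) hmin
  have hspos : 0 < s := by
    rcases lt_or_eq_of_le hs0 with h | h
    · exact h
    · exact absurd (show min α s = 0 by rw [hsdef, ← h, min_eq_right hα0]) hmin
  have hμu : μ (Set.Icc 0 u) = ENNReal.ofReal α := hμ.2 u
  -- α + s ≤ 1
  have hsum : α + s ≤ 1 := by
    have hinter : μ (Set.Icc 0 u ∩ Set.Icc u 1) = 0 := by
      refine measure_mono_null (fun w hw => ?_) (hyperplane_null hC hμ k₀ (u k₀))
      exact le_antisymm (hw.1.2 k₀) (hw.2.1 k₀)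
    have h2 : μ (Set.Icc 0 u) + μ (Set.Icc u 1)
        = μ (Set.Icc 0 u ∪ Set.Icc u 1) + μ (Set.Icc 0 u ∩ Set.Icc u 1) :=
      (measure_union_add_inter _ measurableSet_Icc).symm
    rw [hinter, add_zero, hμu, hsu] at h2
    have h3 : ENNReal.ofReal α + ENNReal.ofReal s ≤ 1 := by
      rw [h2]; exact prob_le_one
    rw [← ENNReal.ofReal_add hα0 hs0, ← ENNReal.ofReal_one] at h3
    exact (ENNReal.ofReal_le_ofReal_iff zero_le_one).1 h3
  have hεpos : ∀ n : ℕ, (0:ℝ) < 1/(n+1) := fun n => by positivity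
  have hεmono : ∀ {n m : ℕ}, n ≤ m → (1:ℝ)/(m+1) ≤ 1/(n+1) := by
    intro n m h
    have h' : (n:ℝ) ≤ m := by exact_mod_cast h
    exact one_div_le_one_div_of_le (by positivity) (by linarith)
  rcases le_total α s with hcase | hcase
  -- CASE 1 : α ≤ s.  p = α, a = u, b on the upper diagonal.
  · set bpt : ℝ → Cube d := fun t k => clampI (max (u k : ℝ) t) with hbpt
    have hbmono : ∀ {r t : ℝ}, r ≤ t → bpt r ≤ bpt t :=
      fun h k => clampI_mono (max_le_max le_rfl h)
    have hblip : ∀ {r t : ℝ}, r ≤ t → ∀ k, (bpt t k : ℝ) ≤ (bpt r k : ℝ) + (t - r) := by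
      intro r t h k
      have h1 := clampI_lip (max_le_max (le_refl (u k : ℝ)) h)
      have h2 := max_lip (u k : ℝ) h
      linarith
    set f : ℝ → ℝ := fun t => (μ (Set.Icc (bpt t) 1)).toReal with hf
    have hfmono : Antitone f := by
      intro r t h
      exact ENNReal.toReal_mono (measure_ne_top μ _)
        (measure_mono (Set.Icc_subset_Icc (hbmono h) le_rfl))
    have hb0 : bpt 0 = u := by
      funext k
      exact Subtype.ext (by
        show (clampI (max (u k : ℝ) 0) : ℝ) = (u k : ℝ)
        rw [max_eq_left (u k).2.1, clampI_of_mem (u k).2.1 (u k).2.2])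
    have hb1 : bpt 1 = 1 := by
      funext k
      exact Subtype.ext (by
        show (clampI (max (u k : ℝ) 1) : ℝ) = ((1 : Cube d) k : ℝ)
        rw [max_eq_right (u k).2.2, clampI_of_mem zero_le_one le_rfl]
        try rfl)
    have hf0 : f 0 = s := by
      rw [hf]; simp only [hb0, hsu]
      exact ENNReal.toReal_ofReal hs0
    have hf1 : f 1 = 0 := by
      rw [hf]; simp only [hb1, Set.Icc_self]
      have : μ {(1 : Cube d)} = 0 := by
        refine measure_mono_null (fun w hw => ?_) (hyperplane_null hC hμ k₀ 1)
        rw [Set.mem_singleton_iff] at hw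
        rw [hw]; rfl
      rw [this]; rfl
    have hivt0 : α ≤ f 0 := by rw [hf0]; exact hcase
    have hivt1 : f 1 < α := by rw [hf1]; exact hαpos
    have hl : ∀ t : ℝ, Filter.Tendsto (fun n : ℕ => f (t - 1/(n+1)))
        Filter.atTop (nhds (f t)) := by
      intro t
      refine (ENNReal.tendsto_toReal (measure_ne_top μ _)).comp
        (tendsto_upper_left (μ := μ) (fun n => bpt (t - 1/(n+1))) (bpt t)
          (fun n m hnm => hbmono (by linarith [hεmono hnm])) ?_)
      intro k w
      constructor
      · intro h
        rw [← Subtype.coe_le_coe]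
        refine le_of_forall_pos_le_add (fun ε hε => ?_)
        obtain ⟨n, hn⟩ := exists_nat_one_div_lt hε
        have h2 := hblip (by linarith [hεpos n] : t - 1/(n+1) ≤ t) k
        have h3 : (bpt (t - 1/(n+1)) k : ℝ) ≤ (w : ℝ) := Subtype.coe_le_coe.2 (h n)
        have hn' : (1:ℝ)/(n+1) < ε := by exact_mod_cast hn
        linarith
      · intro h n
        exact le_trans (hbmono (by linarith [hεpos n] : t - 1/(n+1) ≤ t) k) h
    have hr : ∀ t : ℝ, Filter.Tendsto (fun n : ℕ => f (t + 1/(n+1)))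
        Filter.atTop (nhds (f t)) := by
      intro t
      refine (ENNReal.tendsto_toReal (measure_ne_top μ _)).comp
        (tendsto_upper_right hC hμ (fun n => bpt (t + 1/(n+1))) (bpt t)
          (fun n m hnm => hbmono (by linarith [hεmono hnm]))
          (fun n => hbmono (by linarith [hεpos n]))
          ?_)
      intro w hw
      haveI : Nonempty (Fin d) := ⟨k₀⟩
      have hne : (Finset.univ : Finset (Fin d)).Nonempty := Finset.univ_nonempty
      set δ := Finset.univ.inf' hne (fun k => (w k : ℝ) - (bpt t k : ℝ)) with hδ
      have hδpos : 0 < δ := by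
        rw [hδ, Finset.lt_inf'_iff]
        exact fun k _ => sub_pos.2 (Subtype.coe_lt_coe.2 (hw k))
      obtain ⟨n, hn⟩ := exists_nat_one_div_lt hδpos
      refine ⟨n, fun k => ?_⟩
      rw [← Subtype.coe_le_coe]
      have h2 := hblip (by linarith [hεpos n] : t ≤ t + 1/(n+1)) k
      have h3 : δ ≤ (w k : ℝ) - (bpt t k : ℝ) := Finset.inf'_le _ (Finset.mem_univ k)
      have hn' : (1:ℝ)/(n+1) < δ := by exact_mod_cast hn
      linarith
    obtain ⟨ts, hts0, hts1, htsf⟩ := key_ivt f hfmono hl hr zero_le_one hivt0 hivt1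
    have hts1' : ts < 1 := by
      rcases lt_or_eq_of_le hts1 with h | h
      · exact h
      · exfalso; rw [h, hf1] at htsf; linarith
    set b : Cube d := bpt ts with hb
    have hub : u ≤ b := by
      intro k
      rw [← Subtype.coe_le_coe]
      show (u k : ℝ) ≤ (clampI (max (u k : ℝ) ts) : ℝ)
      rw [clampI_coe]
      exact le_trans (le_min (u k).2.2 (le_max_left _ _)) (le_max_right _ _)
    refine ⟨α, ⟨hαpos, by linarith⟩, u, b, hu, fun k => ?_, hub, by rw [hμu], ?_⟩
    · constructor
      · exact lt_of_lt_of_le (hu k).1 (hub k)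
      · rw [← Subtype.coe_lt_coe]
        show (clampI (max (u k : ℝ) ts) : ℝ) < ((1 : unitInterval) : ℝ)
        rw [clampI_coe]
        have h1 : max (u k : ℝ) ts < 1 := max_lt (Subtype.coe_lt_coe.2 (hu k).2) hts1'
        exact max_lt (by norm_num) (lt_of_le_of_lt (min_le_right _ _) h1)
    · rw [show ENNReal.ofReal α = ENNReal.ofReal (f ts) by rw [htsf]]
      rw [hf]
      exact (ENNReal.ofReal_toReal (measure_ne_top μ _)).symm
  -- CASE 2 : s ≤ α.  p = s, b = u, a on the lower diagonal.
  · set apt : ℝ → Cube d := fun t k => clampI (min (u k : ℝ) t) with hapt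
    have hamono : ∀ {r t : ℝ}, r ≤ t → apt r ≤ apt t :=
      fun h k => clampI_mono (min_le_min le_rfl h)
    have halip : ∀ {r t : ℝ}, r ≤ t → ∀ k, (apt t k : ℝ) ≤ (apt r k : ℝ) + (t - r) := by
      intro r t h k
      have h1 := clampI_lip (min_le_min (le_refl (u k : ℝ)) h)
      have h2 := min_lip (u k : ℝ) h
      linarith
    set g : ℝ → ℝ := fun t => (μ (Set.Icc 0 (apt t))).toReal with hg
    set f : ℝ → ℝ := fun t => g (-t) with hf
    have hfmono : Antitone f := by
      intro r t h
      exact ENNReal.toReal_mono (measure_ne_top μ _)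
        (measure_mono (Set.Icc_subset_Icc le_rfl (hamono (by linarith : -t ≤ -r))))
    have ha1 : apt 1 = u := by
      funext k
      exact Subtype.ext (by
        show (clampI (min (u k : ℝ) 1) : ℝ) = (u k : ℝ)
        rw [min_eq_left (u k).2.2, clampI_of_mem (u k).2.1 (u k).2.2])
    have ha0 : apt 0 = 0 := by
      funext k
      exact Subtype.ext (by
        show (clampI (min (u k : ℝ) 0) : ℝ) = ((0 : Cube d) k : ℝ)
        rw [min_eq_right (u k).2.1, clampI_of_mem le_rfl zero_le_one]
        try rfl)
    have hfm1 : f (-1) = α := by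
      rw [hf]; simp only [neg_neg]
      rw [hg]; simp only [ha1, hμu]
      exact ENNReal.toReal_ofReal hα0
    have hf0 : f 0 = 0 := by
      rw [hf]; simp only [neg_zero]
      rw [hg]; simp only [ha0, Set.Icc_self]
      have : μ {(0 : Cube d)} = 0 := by
        refine measure_mono_null (fun w hw => ?_) (hyperplane_null hC hμ k₀ 0)
        rw [Set.mem_singleton_iff] at hw
        rw [hw]; rfl
      rw [this]; rfl
    have hivt0 : s ≤ f (-1) := by rw [hfm1]; exact hcase
    have hivt1 : f 0 < s := by rw [hf0]; exact hspos
    have hl : ∀ t : ℝ, Filter.Tendsto (fun n : ℕ => f (t - 1/(n+1)))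
        Filter.atTop (nhds (f t)) := by
      intro t
      refine (ENNReal.tendsto_toReal (measure_ne_top μ _)).comp
        (tendsto_lower_right (μ := μ) (fun n => apt (-(t - 1/(n+1)))) (apt (-t))
          (fun n m hnm => hamono (by linarith [hεmono hnm])) ?_)
      intro k w
      constructor
      · intro h
        rw [← Subtype.coe_le_coe]
        refine le_of_forall_pos_le_add (fun ε hε => ?_)
        obtain ⟨n, hn⟩ := exists_nat_one_div_lt hε
        have h2 := halip (by linarith [hεpos n] : -t ≤ -(t - 1/(n+1))) k
        have h3 : (w : ℝ) ≤ (apt (-(t - 1/(n+1))) k : ℝ) := Subtype.coe_le_coe.2 (h n)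
        have hn' : (1:ℝ)/(n+1) < ε := by exact_mod_cast hn
        linarith
      · intro h n
        exact le_trans h (hamono (by linarith [hεpos n] : -t ≤ -(t - 1/(n+1))) k)
    have hr : ∀ t : ℝ, Filter.Tendsto (fun n : ℕ => f (t + 1/(n+1)))
        Filter.atTop (nhds (f t)) := by
      intro t
      refine (ENNReal.tendsto_toReal (measure_ne_top μ _)).comp
        (tendsto_lower_left hC hμ (fun n => apt (-(t + 1/(n+1)))) (apt (-t))
          (fun n m hnm => hamono (by linarith [hεmono hnm]))
          (fun n => hamono (by linarith [hεpos n]))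
          ?_)
      intro w hw
      haveI : Nonempty (Fin d) := ⟨k₀⟩
      have hne : (Finset.univ : Finset (Fin d)).Nonempty := Finset.univ_nonempty
      set δ := Finset.univ.inf' hne (fun k => (apt (-t) k : ℝ) - (w k : ℝ)) with hδ
      have hδpos : 0 < δ := by
        rw [hδ, Finset.lt_inf'_iff]
        exact fun k _ => sub_pos.2 (Subtype.coe_lt_coe.2 (hw k))
      obtain ⟨n, hn⟩ := exists_nat_one_div_lt hδpos
      refine ⟨n, fun k => ?_⟩
      rw [← Subtype.coe_le_coe]
      have h2 := halip (by linarith [hεpos n] : -(t + 1/(n+1)) ≤ -t) k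
      have h3 : δ ≤ (apt (-t) k : ℝ) - (w k : ℝ) := Finset.inf'_le _ (Finset.mem_univ k)
      have hn' : (1:ℝ)/(n+1) < δ := by exact_mod_cast hn
      linarith
    obtain ⟨ts, hts0, hts1, htsf⟩ := key_ivt f hfmono hl hr
      (by norm_num : (-1:ℝ) ≤ 0) hivt0 hivt1
    have hts1' : ts < 0 := by
      rcases lt_or_eq_of_le hts1 with h | h
      · exact h
      · exfalso; rw [h, hf0] at htsf; linarith
    set a : Cube d := apt (-ts) with ha
    have htpos : 0 < -ts := by linarith
    have hau : a ≤ u := by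
      intro k
      rw [← Subtype.coe_le_coe]
      show (clampI (min (u k : ℝ) (-ts)) : ℝ) ≤ (u k : ℝ)
      rw [clampI_coe]
      exact max_le (u k).2.1 (le_trans (min_le_right _ _) (min_le_left _ _))
    refine ⟨s, ⟨hspos, by linarith⟩, a, u, fun k => ?_, hu, hau, ?_, by rw [hsu]⟩
    · constructor
      · rw [← Subtype.coe_lt_coe]
        show ((0 : unitInterval) : ℝ) < (clampI (min (u k : ℝ) (-ts)) : ℝ)
        rw [clampI_coe]
        have h1 : 0 < min (u k : ℝ) (-ts) := lt_min (Subtype.coe_lt_coe.2 (hu k).1) htpos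
        exact lt_of_lt_of_le (lt_min zero_lt_one h1) (le_max_right _ _)
      · exact lt_of_le_of_lt (hau k) (hu k).2
    · rw [show ENNReal.ofReal s = ENNReal.ofReal (f ts) by rw [htsf]]
      rw [hf, hg]
      exact (ENNReal.ofReal_toReal (measure_ne_top μ _)).symm
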